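/- arXiv:1604.03007 — 7 statements merged into one kernel-verified Lean document; each statement's English description precedes it below -/
import Mathlib

section
/- Let r₁, ṙ₁, r₂, ṙ₂ ∈ ℝ³ with r₁ ≠ 0, r₂ ≠ 0, and let μ ∈ ℝ. Define for j = 1, 2 the Laplace–Lenz vectors μL_j = (|ṙ_j|² − μ/|r_j|)r_j − (r_j·ṙ_j)ṙ_j and energies E_j = ½|ṙ_j|² − μ/|r_j|. Then the vector ξ := [μ(L₁ − L₂) − (E₁ r₁ − E₂ r₂)] × (r₁ − r₂), in which the terms μ/|r₁| and μ/|r₂| cancel, satisfies ξ = ½(|ṙ₂|² − |ṙ₁|²)·(r₁ × r₂) − (ṙ₁·r₁)·(ṙ₁ × (r₁ − r₂)) + (ṙ₂·r₂)·(ṙ₂ × (r₁ − r₂)). -/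
open Matrix

/-- For `r₁, r₂ ≠ 0`, with `μL_j = (|ṙ_j|² − μ/|r_j|) r_j − (r_j·ṙ_j) ṙ_j`
and `E_j = ½|ṙ_j|² − μ/|r_j|`, the vector
`ξ = [μ(L₁ − L₂) − (E₁ r₁ − E₂ r₂)] × (r₁ − r₂)` (in which `μ/|r₁|`, `μ/|r₂|` cancel)
satisfies
`ξ = ½(|ṙ₂|² − |ṙ₁|²)(r₁ × r₂) − (ṙ₁·r₁)(ṙ₁ × (r₁ − r₂)) + (ṙ₂·r₂)(ṙ₂ × (r₁ − r₂))`. -/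
theorem xi_formula (r₁ rdot₁ r₂ rdot₂ : Fin 3 → ℝ) (h₁ : r₁ ≠ 0) (h₂ : r₂ ≠ 0) (μ : ℝ)
    (muL₁ muL₂ : Fin 3 → ℝ) (E₁ E₂ : ℝ) (ξ : Fin 3 → ℝ)
    (hL₁ : muL₁ = (rdot₁ ⬝ᵥ rdot₁ - μ / Real.sqrt (r₁ ⬝ᵥ r₁)) • r₁ - (r₁ ⬝ᵥ rdot₁) • rdot₁)
    (hL₂ : muL₂ = (rdot₂ ⬝ᵥ rdot₂ - μ / Real.sqrt (r₂ ⬝ᵥ r₂)) • r₂ - (r₂ ⬝ᵥ rdot₂) • rdot₂)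
    (hE₁ : E₁ = (1 / 2) * (rdot₁ ⬝ᵥ rdot₁) - μ / Real.sqrt (r₁ ⬝ᵥ r₁))
    (hE₂ : E₂ = (1 / 2) * (rdot₂ ⬝ᵥ rdot₂) - μ / Real.sqrt (r₂ ⬝ᵥ r₂))
    (hξ : ξ = ((muL₁ - muL₂) - (E₁ • r₁ - E₂ • r₂)) ⨯₃ (r₁ - r₂)) :
    ξ = ((1 / 2) * (rdot₂ ⬝ᵥ rdot₂ - rdot₁ ⬝ᵥ rdot₁)) • (r₁ ⨯₃ r₂)
        - (rdot₁ ⬝ᵥ r₁) • (rdot₁ ⨯₃ (r₁ - r₂))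
        + (rdot₂ ⬝ᵥ r₂) • (rdot₂ ⨯₃ (r₁ - r₂)) := by
  subst hL₁ hL₂ hE₁ hE₂ hξ
  ext i
  fin_cases i <;>
  simp [crossProduct, dotProduct, Fin.sum_univ_three, dotProduct_comm] <;>
  ring
end

section
/- Let D₁, D₂, J ∈ ℝ³ with D₁ × D₂ ≠ 0. Define ρ̇₁ = ((J × D₂)·(D₁ × D₂)) / |D₁ × D₂|² and ρ̇₂ = ((J × D₁)·(D₁ × D₂)) / |D₁ × D₂|². Then (D₁ ρ̇₁ − D₂ ρ̇₂ − J) × (D₁ × D₂) = 0; that is, with these values of ρ̇₁, ρ̇₂ the residual of the angular momentum equation is parallel to D₁ × D₂. -/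
open Matrix

/-- If `D₁ × D₂ ≠ 0` and
`ρ̇₁ = ((J × D₂)·(D₁ × D₂)) / |D₁ × D₂|²`, `ρ̇₂ = ((J × D₁)·(D₁ × D₂)) / |D₁ × D₂|²`,
then `(D₁ ρ̇₁ − D₂ ρ̇₂ − J) × (D₁ × D₂) = 0`: the residual of the angular momentum
equation is parallel to `D₁ × D₂`. -/
theorem residual_parallel (D₁ D₂ J : Fin 3 → ℝ) (hD : D₁ ⨯₃ D₂ ≠ 0)
    (ρdot₁ ρdot₂ : ℝ)
    (h₁ : ρdot₁ = ((J ⨯₃ D₂) ⬝ᵥ (D₁ ⨯₃ D₂)) / ((D₁ ⨯₃ D₂) ⬝ᵥ (D₁ ⨯₃ D₂)))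
    (h₂ : ρdot₂ = ((J ⨯₃ D₁) ⬝ᵥ (D₁ ⨯₃ D₂)) / ((D₁ ⨯₃ D₂) ⬝ᵥ (D₁ ⨯₃ D₂))) :
    (ρdot₁ • D₁ - ρdot₂ • D₂ - J) ⨯₃ (D₁ ⨯₃ D₂) = 0 := by
  have hs : (D₁ ⨯₃ D₂) ⬝ᵥ (D₁ ⨯₃ D₂) ≠ 0 := by
    intro h
    apply hD
    have := dotProduct_self_eq_zero.mp h
    exact this
  subst h₁ h₂
  ext i
  fin_cases i <;>
  · simp [crossProduct, dotProduct, Fin.sum_univ_succ] at hs ⊢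
    rw [div_mul_eq_mul_div, div_mul_eq_mul_div, div_sub_div_same, div_sub' hs, div_eq_zero_iff]
    left
    ring
end

section
/- Let F be a field and let q = b₂X² + b₁X + b₀ ∈ F[X] with b₂ ≠ 0, and p = a₅X⁵ + a₄X⁴ + a₃X³ + a₂X² + a₁X + a₀ ∈ F[X] with a₅ ≠ 0. Define β₂ = −b₁/b₂, γ₂ = −b₀/b₂, β_{h+1} = β_hβ₂ + γ_h, γ_{h+1} = β_hγ₂ (h = 2, 3, 4), and set p̃ = ã₁X + ã₀ where ã₁ = a₁ + Σ_{h=2}^{5} a_h β_h and ã₀ = a₀ + Σ_{h=2}^{5} a_h γ_h. If ã₁ ≠ 0, then the resultants satisfy Res(p, q) = b₂⁴ · Res(p̃, q). -/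
open Polynomial

/-- The Sylvester matrix of `f` and `g` with formal degrees `m` and `n`:
an `(m+n) × (m+n)` matrix whose first `n` columns are shifted copies of the
coefficients of `f` and whose last `m` columns are shifted copies of the
coefficients of `g`. -/
noncomputable def sylvesterMatrix {R : Type*} [CommRing R] (m n : ℕ) (f g : R[X]) :
    Matrix (Fin (m + n)) (Fin (m + n)) R :=
  Matrix.of fun i j =>
    if (j : ℕ) < n then
      (if (j : ℕ) ≤ (i : ℕ) then f.coeff ((i : ℕ) - (j : ℕ)) else 0)
    else
      (if (j : ℕ) - n ≤ (i : ℕ) then g.coeff ((i : ℕ) - ((j : ℕ) - n)) else 0)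

/-- The resultant of `f` and `g` (with formal degrees `m`, `n`), i.e. the
determinant of their Sylvester matrix. -/
noncomputable def resultant {R : Type*} [CommRing R] (m n : ℕ) (f g : R[X]) : R :=
  (sylvesterMatrix m n f g).det

set_option maxHeartbeats 2000000 in
lemma res12 {F : Type*} [Field F] (b₀ b₁ b₂ t₀ t₁ : F) :
    _root_.resultant 1 2 (C t₁ * X + C t₀) (C b₂ * X ^ 2 + C b₁ * X + C b₀)
      = t₁ * t₁ * b₀ - t₁ * t₀ * b₁ + t₀ * t₀ * b₂ := by
  have : sylvesterMatrix 1 2 (C t₁ * X + C t₀) (C b₂ * X ^ 2 + C b₁ * X + C b₀)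
      = !![t₀, 0, b₀; t₁, t₀, b₁; 0, t₁, b₂] := by
    ext i j
    fin_cases i <;> fin_cases j <;>
      (first | rfl | simp [sylvesterMatrix, coeff_add, coeff_C_mul, coeff_X_pow, coeff_C, coeff_X, show ((2:Fin 7):ℕ)=2 from rfl, show ((3:Fin 7):ℕ)=3 from rfl, show ((4:Fin 7):ℕ)=4 from rfl, show ((5:Fin 7):ℕ)=5 from rfl, show ((6:Fin 7):ℕ)=6 from rfl]) <;> (try (intros; omega)) <;> (try rfl)
  rw [_root_.resultant, this]
  simp [Matrix.det_fin_three]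
  ring

set_option maxHeartbeats 4000000 in
set_option maxRecDepth 20000 in
lemma res52 {F : Type*} [Field F] (b₀ b₁ b₂ a₀ a₁ a₂ a₃ a₄ a₅ : F) :
    _root_.resultant 5 2
        (C a₅ * X ^ 5 + C a₄ * X ^ 4 + C a₃ * X ^ 3 + C a₂ * X ^ 2 + C a₁ * X + C a₀)
        (C b₂ * X ^ 2 + C b₁ * X + C b₀)
      = a₅^2*b₀^5 - a₄*a₅*b₀^4*b₁ + a₄^2*b₀^4*b₂ + a₃*a₅*b₀^3*b₁^2 - 2*a₃*a₅*b₀^4*b₂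
        - a₃*a₄*b₀^3*b₁*b₂ + a₃^2*b₀^3*b₂^2 - a₂*a₅*b₀^2*b₁^3 + 3*a₂*a₅*b₀^3*b₁*b₂
        + a₂*a₄*b₀^2*b₁^2*b₂ - 2*a₂*a₄*b₀^3*b₂^2 - a₂*a₃*b₀^2*b₁*b₂^2 + a₂^2*b₀^2*b₂^3
        + a₁*a₅*b₀*b₁^4 - 4*a₁*a₅*b₀^2*b₁^2*b₂ + 2*a₁*a₅*b₀^3*b₂^2 - a₁*a₄*b₀*b₁^3*b₂
        + 3*a₁*a₄*b₀^2*b₁*b₂^2 + a₁*a₃*b₀*b₁^2*b₂^2 - 2*a₁*a₃*b₀^2*b₂^3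
        - a₁*a₂*b₀*b₁*b₂^3 + a₁^2*b₀*b₂^4 - a₀*a₅*b₁^5 + 5*a₀*a₅*b₀*b₁^3*b₂
        - 5*a₀*a₅*b₀^2*b₁*b₂^2 + a₀*a₄*b₁^4*b₂ - 4*a₀*a₄*b₀*b₁^2*b₂^2
        + 2*a₀*a₄*b₀^2*b₂^3 - a₀*a₃*b₁^3*b₂^2 + 3*a₀*a₃*b₀*b₁*b₂^3 + a₀*a₂*b₁^2*b₂^3
        - 2*a₀*a₂*b₀*b₂^4 - a₀*a₁*b₁*b₂^4 + a₀^2*b₂^5 := by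
  have : sylvesterMatrix 5 2
        (C a₅ * X ^ 5 + C a₄ * X ^ 4 + C a₃ * X ^ 3 + C a₂ * X ^ 2 + C a₁ * X + C a₀)
        (C b₂ * X ^ 2 + C b₁ * X + C b₀)
      = !![a₀,0,b₀,0,0,0,0; a₁,a₀,b₁,b₀,0,0,0; a₂,a₁,b₂,b₁,b₀,0,0;
           a₃,a₂,0,b₂,b₁,b₀,0; a₄,a₃,0,0,b₂,b₁,b₀; a₅,a₄,0,0,0,b₂,b₁;
           0,a₅,0,0,0,0,b₂] := by
    ext i j
    fin_cases i <;> fin_cases j <;>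
      (first | rfl | simp [sylvesterMatrix, coeff_add, coeff_C_mul, coeff_X_pow, coeff_C, coeff_X, show ((2:Fin 7):ℕ)=2 from rfl, show ((3:Fin 7):ℕ)=3 from rfl, show ((4:Fin 7):ℕ)=4 from rfl, show ((5:Fin 7):ℕ)=5 from rfl, show ((6:Fin 7):ℕ)=6 from rfl]) <;> (try (intros; omega)) <;> (try rfl)
  rw [_root_.resultant, this]
  have hA : (!![a₀,b₁,b₀,0,0,0; a₁,b₂,b₁,b₀,0,0; a₂,0,b₂,b₁,b₀,0;
      a₃,0,0,b₂,b₁,b₀; a₄,0,0,0,b₂,b₁; a₅,0,0,0,0,b₂] : Matrix (Fin 6) (Fin 6) F).det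
      = -(a₅*b₁^5) + 4*a₅*b₀*b₁^3*b₂ - 3*a₅*b₀^2*b₁*b₂^2 + a₄*b₁^4*b₂ - 3*a₄*b₀*b₁^2*b₂^2 + a₄*b₀^2*b₂^3 - a₃*b₁^3*b₂^2 + 2*a₃*b₀*b₁*b₂^3 + a₂*b₁^2*b₂^3 - a₂*b₀*b₂^4 - a₁*b₁*b₂^4 + a₀*b₂^5 := by
    simp only [Matrix.det_succ_row_zero, Fin.sum_univ_succ, Fin.sum_univ_zero, Matrix.det_fin_zero, Matrix.submatrix_apply, Fin.zero_succAbove, Fin.succ_succAbove_zero, Fin.succ_succAbove_succ, Matrix.of_apply, Matrix.cons_val_zero, Matrix.cons_val_succ, Fin.val_zero, Fin.val_succ, pow_zero, pow_succ]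
    ring
  have hB : (!![a₁,a₀,b₀,0,0,0; a₂,a₁,b₁,b₀,0,0; a₃,a₂,b₂,b₁,b₀,0;
      a₄,a₃,0,b₂,b₁,b₀; a₅,a₄,0,0,b₂,b₁; 0,a₅,0,0,0,b₂] : Matrix (Fin 6) (Fin 6) F).det
      = a₅^2*b₀^4 - a₄*a₅*b₀^3*b₁ + a₄^2*b₀^3*b₂ + a₃*a₅*b₀^2*b₁^2 - 2*a₃*a₅*b₀^3*b₂ - a₃*a₄*b₀^2*b₁*b₂ + a₃^2*b₀^2*b₂^2 - a₂*a₅*b₀*b₁^3 + 3*a₂*a₅*b₀^2*b₁*b₂ + a₂*a₄*b₀*b₁^2*b₂ - 2*a₂*a₄*b₀^2*b₂^2 - a₂*a₃*b₀*b₁*b₂^2 + a₂^2*b₀*b₂^3 + a₁*a₅*b₁^4 - 4*a₁*a₅*b₀*b₁^2*b₂ + 2*a₁*a₅*b₀^2*b₂^2 - a₁*a₄*b₁^3*b₂ + 3*a₁*a₄*b₀*b₁*b₂^2 + a₁*a₃*b₁^2*b₂^2 - 2*a₁*a₃*b₀*b₂^3 - a₁*a₂*b₁*b₂^3 + a₁^2*b₂^4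 + a₀*a₅*b₁^3*b₂ - 2*a₀*a₅*b₀*b₁*b₂^2 - a₀*a₄*b₁^2*b₂^2 + a₀*a₄*b₀*b₂^3 + a₀*a₃*b₁*b₂^3 - a₀*a₂*b₂^4 := by
    simp only [Matrix.det_succ_row_zero, Fin.sum_univ_succ, Fin.sum_univ_zero, Matrix.det_fin_zero, Matrix.submatrix_apply, Fin.zero_succAbove, Fin.succ_succAbove_zero, Fin.succ_succAbove_succ, Matrix.of_apply, Matrix.cons_val_zero, Matrix.cons_val_succ, Fin.val_zero, Fin.val_succ, pow_zero, pow_succ]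
    ring
  have h0 : (!![a₀,0,b₀,0,0,0,0; a₁,a₀,b₁,b₀,0,0,0; a₂,a₁,b₂,b₁,b₀,0,0;
           a₃,a₂,0,b₂,b₁,b₀,0; a₄,a₃,0,0,b₂,b₁,b₀; a₅,a₄,0,0,0,b₂,b₁;
           0,a₅,0,0,0,0,b₂] : Matrix (Fin 7) (Fin 7) F).submatrix Fin.succ
           ((0 : Fin 7).succAbove)
      = !![a₀,b₁,b₀,0,0,0; a₁,b₂,b₁,b₀,0,0; a₂,0,b₂,b₁,b₀,0;
      a₃,0,0,b₂,b₁,b₀; a₄,0,0,0,b₂,b₁; a₅,0,0,0,0,b₂] := by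
    ext i j
    fin_cases i <;> fin_cases j <;> rfl
  have h2 : (!![a₀,0,b₀,0,0,0,0; a₁,a₀,b₁,b₀,0,0,0; a₂,a₁,b₂,b₁,b₀,0,0;
           a₃,a₂,0,b₂,b₁,b₀,0; a₄,a₃,0,0,b₂,b₁,b₀; a₅,a₄,0,0,0,b₂,b₁;
           0,a₅,0,0,0,0,b₂] : Matrix (Fin 7) (Fin 7) F).submatrix Fin.succ
           ((2 : Fin 7).succAbove)
      = !![a₁,a₀,b₀,0,0,0; a₂,a₁,b₁,b₀,0,0; a₃,a₂,b₂,b₁,b₀,0;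
      a₄,a₃,0,b₂,b₁,b₀; a₅,a₄,0,0,b₂,b₁; 0,a₅,0,0,0,b₂] := by
    ext i j
    fin_cases i <;> fin_cases j <;> rfl
  rw [Matrix.det_succ_row_zero, Fin.sum_univ_seven]
  rw [h0, h2, hA, hB]
  norm_num [show (![a₀,0,b₀,0,0,0,0] : Fin 7 → F) 2 = b₀ from rfl, show (![a₀,0,b₀,0,0,0,0] : Fin 7 → F) 1 = 0 from rfl, show (![a₀,0,b₀,0,0,0,0] : Fin 7 → F) 3 = 0 from rfl, show (![a₀,0,b₀,0,0,0,0] : Fin 7 → F) 4 = 0 from rfl, show (![a₀,0,b₀,0,0,0,0] : Fin 7 → F) 5 = 0 from rfl, show (![a₀,0,b₀,0,0,0,0] : Fin 7 → F) 6 = 0 from rfl]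
  ring


set_option maxHeartbeats 4000000 in
/-- Let `q = b₂X² + b₁X + b₀` with `b₂ ≠ 0` and
`p = a₅X⁵ + a₄X⁴ + a₃X³ + a₂X² + a₁X + a₀` with `a₅ ≠ 0`. With
`β₂ = −b₁/b₂`, `γ₂ = −b₀/b₂`, `β_{h+1} = β_hβ₂ + γ_h`, `γ_{h+1} = β_hγ₂`, set
`p̃ = ã₁X + ã₀` where `ã₁ = a₁ + Σ_{h=2}^{5} a_h β_h`, `ã₀ = a₀ + Σ_{h=2}^{5} a_h γ_h`.
If `ã₁ ≠ 0`, then `Res(p,q) = b₂⁴ · Res(p̃,q)`. -/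
theorem resultant_reduction_deg_five {F : Type*} [Field F]
    (b₀ b₁ b₂ a₀ a₁ a₂ a₃ a₄ a₅ : F) (hb : b₂ ≠ 0) (ha : a₅ ≠ 0)
    (β₂ γ₂ β₃ γ₃ β₄ γ₄ β₅ γ₅ ta₁ ta₀ : F)
    (hβ₂ : β₂ = -b₁ / b₂) (hγ₂ : γ₂ = -b₀ / b₂)
    (hβ₃ : β₃ = β₂ * β₂ + γ₂) (hγ₃ : γ₃ = β₂ * γ₂)
    (hβ₄ : β₄ = β₃ * β₂ + γ₃) (hγ₄ : γ₄ = β₃ * γ₂)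
    (hβ₅ : β₅ = β₄ * β₂ + γ₄) (hγ₅ : γ₅ = β₄ * γ₂)
    (hta₁ : ta₁ = a₁ + (a₂ * β₂ + a₃ * β₃ + a₄ * β₄ + a₅ * β₅))
    (hta₀ : ta₀ = a₀ + (a₂ * γ₂ + a₃ * γ₃ + a₄ * γ₄ + a₅ * γ₅))
    (h : ta₁ ≠ 0) :
    _root_.resultant 5 2
        (C a₅ * X ^ 5 + C a₄ * X ^ 4 + C a₃ * X ^ 3 + C a₂ * X ^ 2 + C a₁ * X + C a₀)
        (C b₂ * X ^ 2 + C b₁ * X + C b₀)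
      = b₂ ^ 4 *
        _root_.resultant 1 2 (C ta₁ * X + C ta₀) (C b₂ * X ^ 2 + C b₁ * X + C b₀) := by
  have e2 : β₂ * b₂ = -b₁ := by rw [hβ₂]; field_simp
  have f2 : γ₂ * b₂ = -b₀ := by rw [hγ₂]; field_simp
  have e3 : β₃ * b₂^2 = b₁^2 - b₀*b₂ := by
    linear_combination b₂^2*hβ₃ + (β₂*b₂ - b₁)*e2 + b₂*f2
  have f3 : γ₃ * b₂^2 = b₀*b₁ := by
    linear_combination b₂^2*hγ₃ + γ₂*b₂*e2 - b₁*f2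
  have e4 : β₄ * b₂^3 = -(b₁^3) + 2*b₀*b₁*b₂ := by
    linear_combination b₂^3*hβ₄ + (β₂*b₂)*e3 + (b₁^2 - b₀*b₂)*e2 + b₂*f3
  have f4 : γ₄ * b₂^3 = -(b₀*b₁^2) + b₀^2*b₂ := by
    linear_combination b₂^3*hγ₄ + (γ₂*b₂)*e3 + (b₁^2 - b₀*b₂)*f2
  have e5 : β₅ * b₂^4 = b₁^4 - 3*b₀*b₁^2*b₂ + b₀^2*b₂^2 := by
    linear_combination b₂^4*hβ₅ + (β₂*b₂)*e4 + (-(b₁^3) + 2*b₀*b₁*b₂)*e2 + b₂*f4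
  have f5 : γ₅ * b₂^4 = b₀*b₁^3 - 2*b₀^2*b₁*b₂ := by
    linear_combination b₂^4*hγ₅ + (γ₂*b₂)*e4 + (-(b₁^3) + 2*b₀*b₁*b₂)*f2
  have h1 : ta₁ * b₂^4 = (a₅*b₁^4 - 3*a₅*b₀*b₁^2*b₂ + a₅*b₀^2*b₂^2 - a₄*b₁^3*b₂ + 2*a₄*b₀*b₁*b₂^2 + a₃*b₁^2*b₂^2 - a₃*b₀*b₂^3 - a₂*b₁*b₂^3 + a₁*b₂^4) := by
    linear_combination b₂^4*hta₁ + a₂*b₂^3*e2 + a₃*b₂^2*e3 + a₄*b₂*e4 + a₅*e5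
  have h0 : ta₀ * b₂^4 = (a₅*b₀*b₁^3 - 2*a₅*b₀^2*b₁*b₂ - a₄*b₀*b₁^2*b₂ + a₄*b₀^2*b₂^2 + a₃*b₀*b₁*b₂^2 - a₂*b₀*b₂^3 + a₀*b₂^4) := by
    linear_combination b₂^4*hta₀ + a₂*b₂^3*f2 + a₃*b₂^2*f3 + a₄*b₂*f4 + a₅*f5
  rw [res52, res12]
  apply mul_left_cancel₀ (pow_ne_zero 8 hb)
  linear_combination b₂^4*(-(b₀*(ta₁*b₂^4 + (a₅*b₁^4 - 3*a₅*b₀*b₁^2*b₂ + a₅*b₀^2*b₂^2 - a₄*b₁^3*b₂ + 2*a₄*b₀*b₁*b₂^2 + a₃*b₁^2*b₂^2 - a₃*b₀*b₂^3 - a₂*b₁*b₂^3 + a₁*b₂^4))) + b₁*(a₅*b₀*b₁^3 - 2*a₅*b₀^2*b₁*b₂ - a₄*b₀*b₁^2*b₂ + a₄*b₀^2*b₂^2 + a₃*b₀*b₁*b₂^2 - a₂*b₀*b₂^3 + a₀*b₂^4))*h1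
    + b₂^4*(b₁*ta₁*b₂^4 - b₂*(ta₀*b₂^4 + (a₅*b₀*b₁^3 - 2*a₅*b₀^2*b₁*b₂ - a₄*b₀*b₁^2*b₂ + a₄*b₀^2*b₂^2 + a₃*b₀*b₁*b₂^2 - a₂*b₀*b₂^3 + a₀*b₂^4)))*h0
end

section
/- Let R be a commutative ring and let p̃₁ = a·X + c and p̃₂ = b·X + d be polynomials in R[X]. Suppose β, γ ∈ R satisfy β·a + γ·b = 1 (a Bézout relation between the leading coefficients). Define w = β·p̃₁ + γ·p̃₂ ∈ R[X] and v = a·d − c·b ∈ R (so that, as a polynomial, v = a·p̃₂ − b·p̃₁). Then the ideal of R[X] generated by {w, v} equals the ideal generated by {p̃₁, p̃₂}. -/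
open Polynomial

/-- Let `R` be a commutative ring, `p̃₁ = aX + c`, `p̃₂ = bX + d`
in `R[X]`, and suppose `βa + γb = 1`. Define `w = β p̃₁ + γ p̃₂` and
`v = ad − cb` (the resultant of `p̃₁`, `p̃₂`, regarded as a constant polynomial;
as a polynomial `v = a p̃₂ − b p̃₁`). Then `⟨w, v⟩ = ⟨p̃₁, p̃₂⟩` as ideals of `R[X]`. -/
theorem ideal_span_resultant_linear {R : Type*} [CommRing R] (a b c d β γ : R)
    (hbez : β * a + γ * b = 1)
    (p₁ p₂ w : R[X]) (v : R)
    (hp₁ : p₁ = C a * X + C c) (hp₂ : p₂ = C b * X + C d)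
    (hw : w = C β * p₁ + C γ * p₂) (hv : v = a * d - c * b) :
    Ideal.span ({w, C v} : Set R[X]) = Ideal.span ({p₁, p₂} : Set R[X]) := by
  have hbezC : C β * C a + C γ * C b = 1 := by
    rw [← C_mul, ← C_mul, ← C_add, hbez, C_1]
  apply le_antisymm
  · rw [Ideal.span_le]
    rintro x (rfl | rfl)
    · rw [SetLike.mem_coe, Ideal.mem_span_pair]
      exact ⟨C β, C γ, hw.symm⟩
    · rw [SetLike.mem_coe, Ideal.mem_span_pair]
      refine ⟨-C b, C a, ?_⟩
      subst hp₁ hp₂ hv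
      simp only [map_sub, map_mul]
      ring
  · rw [Ideal.span_le]
    rintro x (rfl | rfl)
    · rw [SetLike.mem_coe, Ideal.mem_span_pair]
      refine ⟨C a, -C γ, ?_⟩
      subst hw hp₁ hp₂ hv
      simp only [map_sub, map_mul]
      linear_combination (C a * X + C c) * hbezC
    · rw [SetLike.mem_coe, Ideal.mem_span_pair]
      refine ⟨C b, C β, ?_⟩
      subst hw hp₁ hp₂ hv
      simp only [map_sub, map_mul]
      linear_combination (C b * X + C d) * hbezC
end

section
/- Let c₁, c₂, c₃, D₁, D₂, D₃ ∈ ℝ³ and assume (D₁ × D₂)·D₃ ≠ 0. Then the six scalar equations (c₁ − c₂)·(D₁ × D₂) = 0, (c₁ − c₂)·(D₁ × (D₁ × D₂)) = 0, (c₂ − c₃)·(D₂ × D₃) = 0, (c₂ − c₃)·(D₂ × (D₂ × D₃)) = 0, (c₃ − c₁)·(D₃ × D₁) = 0, (c₃ − c₁)·(D₃ × (D₃ × D₁)) = 0 hold if and only if c₁ = c₂, c₂ = c₃ and c₃ = c₁. -/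
open Matrix

private lemma aux_id (v d e : Fin 3 → ℝ) :
    ((d ⨯₃ e) ⬝ᵥ (d ⨯₃ e)) • ((d ⬝ᵥ d) • v - (v ⬝ᵥ d) • d)
      = ((d ⬝ᵥ d) * (v ⬝ᵥ (d ⨯₃ e))) • (d ⨯₃ e)
        + (v ⬝ᵥ (d ⨯₃ (d ⨯₃ e))) • (d ⨯₃ (d ⨯₃ e)) := by
  funext i
  fin_cases i <;>
    simp [cross_apply, dotProduct, Fin.sum_univ_three] <;> ring

private lemma key (v d e : Fin 3 → ℝ) (hne : d ⨯₃ e ≠ 0)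
    (h1 : v ⬝ᵥ (d ⨯₃ e) = 0) (h2 : v ⬝ᵥ (d ⨯₃ (d ⨯₃ e)) = 0) :
    (d ⬝ᵥ d) • v = (v ⬝ᵥ d) • d := by
  have hu : (d ⨯₃ e) ⬝ᵥ (d ⨯₃ e) ≠ 0 :=
    fun hz => hne (dotProduct_self_eq_zero.mp hz)
  have h0 := aux_id v d e
  rw [h1, h2] at h0
  simp only [mul_zero, zero_smul, add_zero, zero_add] at h0
  rcases smul_eq_zero.mp h0 with h | h
  · exact absurd h hu
  · exact sub_eq_zero.mp h

private lemma cross_ne_zero_of_triple (a b c : Fin 3 → ℝ)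
    (h : a ⬝ᵥ (b ⨯₃ c) ≠ 0) : b ⨯₃ c ≠ 0 := by
  intro hz
  apply h
  rw [hz, dotProduct_zero]

/-- If `(D₁ × D₂)·D₃ ≠ 0`, then the six projected equations
hold if and only if `c₁ = c₂`, `c₂ = c₃` and `c₃ = c₁`. -/
theorem six_projections_iff (c₁ c₂ c₃ D₁ D₂ D₃ : Fin 3 → ℝ)
    (h : (D₁ ⨯₃ D₂) ⬝ᵥ D₃ ≠ 0) :
    ((c₁ - c₂) ⬝ᵥ (D₁ ⨯₃ D₂) = 0 ∧
     (c₁ - c₂) ⬝ᵥ (D₁ ⨯₃ (D₁ ⨯₃ D₂)) = 0 ∧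
     (c₂ - c₃) ⬝ᵥ (D₂ ⨯₃ D₃) = 0 ∧
     (c₂ - c₃) ⬝ᵥ (D₂ ⨯₃ (D₂ ⨯₃ D₃)) = 0 ∧
     (c₃ - c₁) ⬝ᵥ (D₃ ⨯₃ D₁) = 0 ∧
     (c₃ - c₁) ⬝ᵥ (D₃ ⨯₃ (D₃ ⨯₃ D₁)) = 0) ↔
    (c₁ = c₂ ∧ c₂ = c₃ ∧ c₃ = c₁) := by
  constructor
  · rintro ⟨h12a, h12b, h23a, h23b, h31a, h31b⟩
    -- triple product in all cyclic forms
    have ht : D₃ ⬝ᵥ (D₁ ⨯₃ D₂) ≠ 0 := by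
      rwa [dotProduct_comm] at h
    have ht2 : D₂ ⬝ᵥ (D₃ ⨯₃ D₁) ≠ 0 := by
      rw [triple_product_permutation]; exact ht
    have ht1 : D₁ ⬝ᵥ (D₂ ⨯₃ D₃) ≠ 0 := by
      rw [triple_product_permutation]; exact ht2
    have hc12 : D₁ ⨯₃ D₂ ≠ 0 := cross_ne_zero_of_triple _ _ _ ht
    have hc23 : D₂ ⨯₃ D₃ ≠ 0 := cross_ne_zero_of_triple _ _ _ ht1
    have hc31 : D₃ ⨯₃ D₁ ≠ 0 := cross_ne_zero_of_triple _ _ _ ht2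
    have k1 := key (c₁ - c₂) D₁ D₂ hc12 h12a h12b
    have k2 := key (c₂ - c₃) D₂ D₃ hc23 h23a h23b
    have k3 := key (c₃ - c₁) D₃ D₁ hc31 h31a h31b
    -- dot products of D_i with itself are nonzero
    have hd1 : D₁ ⬝ᵥ D₁ ≠ 0 := by
      intro hz
      rw [dotProduct_self_eq_zero] at hz
      apply ht1; rw [hz, zero_dotProduct]
    have hd2 : D₂ ⬝ᵥ D₂ ≠ 0 := by
      intro hz
      rw [dotProduct_self_eq_zero] at hz
      apply ht2; rw [hz, zero_dotProduct]
    have hd3 : D₃ ⬝ᵥ D₃ ≠ 0 := by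
      intro hz
      rw [dotProduct_self_eq_zero] at hz
      apply ht; rw [hz, zero_dotProduct]
    have hsum : (c₁ - c₂) + (c₂ - c₃) + (c₃ - c₁) = 0 := by abel
    -- a generic step: show v = 0 where key gives (d⬝d)•v = (v⬝d)•d, and
    -- the other two differences kill the triple product direction.
    have step : ∀ u : Fin 3 → ℝ, (c₂ - c₃) ⬝ᵥ u = 0 → (c₃ - c₁) ⬝ᵥ u = 0 →
        (c₁ - c₂) ⬝ᵥ u = 0 := by
      intro u hu2 hu3
      have : ((c₁ - c₂) + (c₂ - c₃) + (c₃ - c₁)) ⬝ᵥ u = 0 := by rw [hsum, zero_dotProduct]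
      rw [add_dotProduct, add_dotProduct, hu2, hu3] at this
      linarith
    -- c₂ - c₃ is orthogonal to D₂×D₃ (given), and so is c₃ - c₁:
    have h3 : (c₃ - c₁) ⬝ᵥ (D₂ ⨯₃ D₃) = 0 := by
      have := congrArg (fun w => w ⬝ᵥ (D₂ ⨯₃ D₃)) k3
      simp only [smul_dotProduct, dot_cross_self] at this
      have hz : (D₃ ⬝ᵥ D₃) * ((c₃ - c₁) ⬝ᵥ (D₂ ⨯₃ D₃)) = 0 := by
        simpa [smul_eq_mul, mul_zero] using this
      exact (mul_eq_zero.mp hz).resolve_left hd3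
    have h1 : (c₁ - c₂) ⬝ᵥ (D₂ ⨯₃ D₃) = 0 := step _ h23a h3
    -- now dot k1 with D₂⨯₃D₃
    have e1 : c₁ = c₂ := by
      have := congrArg (fun w => w ⬝ᵥ (D₂ ⨯₃ D₃)) k1
      simp only [smul_dotProduct, smul_eq_mul] at this
      rw [h1, mul_zero] at this
      have hvd : (c₁ - c₂) ⬝ᵥ D₁ = 0 := by
        rcases mul_eq_zero.mp this.symm with hz | hz
        · exact hz
        · exact absurd hz ht1
      rw [hvd, zero_smul] at k1
      have := (smul_eq_zero.mp k1).resolve_left hd1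
      exact sub_eq_zero.mp this
    -- similarly for c₂ = c₃ using D₃⨯₃D₁
    have h3' : (c₁ - c₂) ⬝ᵥ (D₃ ⨯₃ D₁) = 0 := by
      have := congrArg (fun w => w ⬝ᵥ (D₃ ⨯₃ D₁)) k1
      simp only [smul_dotProduct, dot_cross_self] at this
      have hz : (D₁ ⬝ᵥ D₁) * ((c₁ - c₂) ⬝ᵥ (D₃ ⨯₃ D₁)) = 0 := by
        simpa [smul_eq_mul, mul_zero] using this
      exact (mul_eq_zero.mp hz).resolve_left hd1
    have h2' : (c₂ - c₃) ⬝ᵥ (D₃ ⨯₃ D₁) = 0 := by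
      have : ((c₁ - c₂) + (c₂ - c₃) + (c₃ - c₁)) ⬝ᵥ (D₃ ⨯₃ D₁) = 0 := by
        rw [hsum, zero_dotProduct]
      rw [add_dotProduct, add_dotProduct, h3', h31a] at this
      linarith
    have e2 : c₂ = c₃ := by
      have := congrArg (fun w => w ⬝ᵥ (D₃ ⨯₃ D₁)) k2
      simp only [smul_dotProduct, smul_eq_mul] at this
      rw [h2', mul_zero] at this
      have hvd : (c₂ - c₃) ⬝ᵥ D₂ = 0 := by
        rcases mul_eq_zero.mp this.symm with hz | hz
        · exact hz
        · exact absurd hz ht2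
      rw [hvd, zero_smul] at k2
      have := (smul_eq_zero.mp k2).resolve_left hd2
      exact sub_eq_zero.mp this
    exact ⟨e1, e2, e2.symm.trans e1.symm⟩
  · rintro ⟨rfl, rfl, -⟩
    simp
end

section
/- Let D₁, D₂, D₃ ∈ ℝ³ with (D₁ × D₂)·D₃ ≠ 0. Let Π₁₂ be the linear span of {D₁ × D₂, D₁ × (D₁ × D₂)} and Π₂₃ the linear span of {D₂ × D₃, D₂ × (D₂ × D₃)}. Then Π₁₂ ∩ Π₂₃ equals the line spanned by the vector D₁ × D₂. -/
open Matrix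

private lemma cross_dot_right' (u v : Fin 3 → ℝ) : (u ⨯₃ v) ⬝ᵥ v = 0 := by
  simp [crossProduct, dotProduct, Fin.sum_univ_three]; ring

private lemma cross_dot_left' (u v : Fin 3 → ℝ) : (u ⨯₃ v) ⬝ᵥ u = 0 := by
  simp [crossProduct, dotProduct, Fin.sum_univ_three]; ring

private lemma triple_shift (u v w : Fin 3 → ℝ) :
    (u ⨯₃ v) ⬝ᵥ w = u ⬝ᵥ (v ⨯₃ w) := by
  simp [crossProduct, dotProduct, Fin.sum_univ_three]; ring

private lemma lagrange' (u v : Fin 3 → ℝ) :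
    (u ⨯₃ (u ⨯₃ v)) ⬝ᵥ v = -((u ⨯₃ v) ⬝ᵥ (u ⨯₃ v)) := by
  simp [crossProduct, dotProduct, Fin.sum_univ_three]; ring

private lemma key_identity (D₂ D₃ u : Fin 3 → ℝ) :
    ((D₂ ⬝ᵥ D₂) * ((D₂ ⨯₃ D₃) ⬝ᵥ (D₂ ⨯₃ D₃))) • u =
      ((u ⬝ᵥ D₂) * ((D₂ ⨯₃ D₃) ⬝ᵥ (D₂ ⨯₃ D₃))) • D₂ +
      (((u ⬝ᵥ (D₂ ⨯₃ D₃)) * (D₂ ⬝ᵥ D₂)) • (D₂ ⨯₃ D₃) +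
       (u ⬝ᵥ (D₂ ⨯₃ (D₂ ⨯₃ D₃))) • (D₂ ⨯₃ (D₂ ⨯₃ D₃))) := by
  funext i
  fin_cases i <;>
    simp [crossProduct, dotProduct, Fin.sum_univ_three] <;> ring

private lemma dot_self_ne (v : Fin 3 → ℝ) (hv : v ≠ 0) : v ⬝ᵥ v ≠ 0 :=
  fun h0 => hv (dotProduct_self_eq_zero.mp h0)

/-- If `(D₁ × D₂)·D₃ ≠ 0`, then the plane
`Π₁₂ = ⟨D₁ × D₂, D₁ × (D₁ × D₂)⟩` and the plane `Π₂₃ = ⟨D₂ × D₃, D₂ × (D₂ × D₃)⟩`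
intersect exactly in the line spanned by `D₁ × D₂`. -/
theorem planes_intersection (D₁ D₂ D₃ : Fin 3 → ℝ)
    (h : (D₁ ⨯₃ D₂) ⬝ᵥ D₃ ≠ 0) :
    Submodule.span ℝ ({D₁ ⨯₃ D₂, D₁ ⨯₃ (D₁ ⨯₃ D₂)} : Set (Fin 3 → ℝ)) ⊓
      Submodule.span ℝ ({D₂ ⨯₃ D₃, D₂ ⨯₃ (D₂ ⨯₃ D₃)} : Set (Fin 3 → ℝ)) =
    Submodule.span ℝ ({D₁ ⨯₃ D₂} : Set (Fin 3 → ℝ)) := by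
  have h12 : D₁ ⨯₃ D₂ ≠ 0 := by
    intro h0; apply h; rw [h0]; simp
  have hn : D₂ ⨯₃ D₃ ≠ 0 := by
    intro h0; apply h; rw [triple_shift, h0]; simp
  have hD₂ : D₂ ≠ 0 := by
    intro h0; apply hn; rw [h0]
    funext i; fin_cases i <;> simp [crossProduct]
  apply le_antisymm
  · -- intersection ≤ line
    rintro x ⟨hx1, hx2⟩
    obtain ⟨a, b, hab⟩ := Submodule.mem_span_pair.mp hx1
    obtain ⟨c, d, hcd⟩ := Submodule.mem_span_pair.mp hx2
    have hxD₂ : x ⬝ᵥ D₂ = 0 := by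
      rw [← hcd]
      rw [add_dotProduct, smul_dotProduct, smul_dotProduct, cross_dot_left', cross_dot_left']
      simp
    have hb : b = 0 := by
      rw [← hab] at hxD₂
      rw [add_dotProduct, smul_dotProduct, smul_dotProduct, cross_dot_right', lagrange'] at hxD₂
      simp only [smul_eq_mul, mul_zero, zero_add, mul_neg, neg_eq_zero] at hxD₂
      rcases mul_eq_zero.mp hxD₂ with hb | hz
      · exact hb
      · exact absurd hz (dot_self_ne _ h12)
    rw [hb, zero_smul, add_zero] at hab
    rw [← hab]
    exact Submodule.smul_mem _ a (Submodule.mem_span_singleton_self _)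
  · -- line ≤ intersection
    rw [Submodule.span_singleton_le_iff_mem]
    refine ⟨Submodule.subset_span (by simp), ?_⟩
    set u := D₁ ⨯₃ D₂ with hu
    have hu0 : u ⬝ᵥ D₂ = 0 := cross_dot_right' D₁ D₂
    set k := (D₂ ⬝ᵥ D₂) * ((D₂ ⨯₃ D₃) ⬝ᵥ (D₂ ⨯₃ D₃)) with hk
    have hkne : k ≠ 0 := mul_ne_zero (dot_self_ne _ hD₂) (dot_self_ne _ hn)
    have hid := key_identity D₂ D₃ u
    rw [hu0, zero_mul, zero_smul, zero_add] at hid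
    apply Submodule.mem_span_pair.mpr
    have h2 : (k⁻¹ * ((u ⬝ᵥ (D₂ ⨯₃ D₃)) * (D₂ ⬝ᵥ D₂))) • (D₂ ⨯₃ D₃) +
        (k⁻¹ * (u ⬝ᵥ (D₂ ⨯₃ (D₂ ⨯₃ D₃)))) • (D₂ ⨯₃ (D₂ ⨯₃ D₃))
        = k⁻¹ • (((u ⬝ᵥ (D₂ ⨯₃ D₃)) * (D₂ ⬝ᵥ D₂)) • (D₂ ⨯₃ D₃) +
          (u ⬝ᵥ (D₂ ⨯₃ (D₂ ⨯₃ D₃))) • (D₂ ⨯₃ (D₂ ⨯₃ D₃))) := by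
      rw [smul_add, smul_smul, smul_smul]
    refine ⟨k⁻¹ * ((u ⬝ᵥ (D₂ ⨯₃ D₃)) * (D₂ ⬝ᵥ D₂)),
      k⁻¹ * (u ⬝ᵥ (D₂ ⨯₃ (D₂ ⨯₃ D₃))), ?_⟩
    rw [h2, ← hid, smul_smul, inv_mul_cancel₀ hkne, one_smul]
end

section
/- For all real numbers a_j, b_j, c_j, d_j, e_j (j = 1, 2, 3), consider the polynomials q₃ = a₃ρ₂² + b₃ρ₁² + c₃ρ₂ + d₃ρ₁ + e₃, q₁ = a₁ρ₃² + b₁ρ₂² + c₁ρ₃ + d₁ρ₂ + e₁, q₂ = a₂ρ₁² + b₂ρ₃² + c₂ρ₁ + d₂ρ₃ + e₂ in the variables ρ₁, ρ₂, ρ₃. Let r = Res(q₃, q₂, ρ₁) be the resultant of q₃ and q₂ with respect to ρ₁ (a polynomial in ρ₂, ρ₃), and let 𝔮 = Res(r, q₁, ρ₃) be the resultant of r and q₁ with respect to ρ₃. Then 𝔮 is a univariate polynomial in ρ₂ of degree at most 8. -/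
set_option maxRecDepth 4000


open Polynomial

/-! We work with the tower `ℝ[ρ₂][ρ₃][ρ₁]`: the innermost polynomial variable is
`ρ₂`, the next one is `ρ₃`, and the outermost one is `ρ₁`.  Thus
`q₃, q₂ ∈ (ℝ[ρ₂][ρ₃])[ρ₁]`, the resultant `r = Res(q₃, q₂, ρ₁)` lies in
`ℝ[ρ₂][ρ₃]`, `q₁ ∈ ℝ[ρ₂][ρ₃]`, and `𝔮 = Res(r, q₁, ρ₃)` lies in `ℝ[ρ₂]`. -/

/-- The variable `ρ₂` as an element of `ℝ[ρ₂][ρ₃]`. -/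
noncomputable def ρ₂ : Polynomial (Polynomial ℝ) := Polynomial.C Polynomial.X

/-- The variable `ρ₃` as an element of `ℝ[ρ₂][ρ₃]`. -/
noncomputable def ρ₃ : Polynomial (Polynomial ℝ) := Polynomial.X

/-- A real constant, as an element of `ℝ[ρ₂][ρ₃]`. -/
noncomputable def cst (x : ℝ) : Polynomial (Polynomial ℝ) :=
  Polynomial.C (Polynomial.C x)


/-- Total-degree bound for an element of `ℝ[ρ₂][ρ₃]`. -/
def TD (D : ℕ) (p : Polynomial (Polynomial ℝ)) : Prop :=
  ∀ k l, D < k + l → (p.coeff k).coeff l = 0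

lemma TD_mono {D E : ℕ} (h : D ≤ E) {p} (hp : TD D p) : TD E p :=
  fun k l hkl => hp k l (lt_of_le_of_lt h hkl)

lemma TD_zero (D : ℕ) : TD D 0 := by intro k l _; simp

lemma TD_add {D : ℕ} {p q} (hp : TD D p) (hq : TD D q) : TD D (p + q) := by
  intro k l h
  simp [coeff_add, hp k l h, hq k l h]

lemma TD_mul {D E : ℕ} {p q} (hp : TD D p) (hq : TD E q) : TD (D + E) (p * q) := by
  intro k l h
  rw [coeff_mul, finset_sum_coeff]
  refine Finset.sum_eq_zero fun x hx => ?_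
  rw [coeff_mul]
  refine Finset.sum_eq_zero fun y hy => ?_
  rw [Finset.HasAntidiagonal.mem_antidiagonal] at hx hy
  by_cases h1 : D < x.1 + y.1
  · rw [hp x.1 y.1 h1, zero_mul]
  · rw [hq x.2 y.2 (by omega), mul_zero]

lemma TD_smul {D : ℕ} (s : ℤˣ) {p} (hp : TD D p) : TD D (s • p) := by
  intro k l h
  rw [Units.smul_def, coeff_smul, coeff_smul, hp k l h, smul_zero]

lemma TD_C {D : ℕ} {p : Polynomial ℝ} (hp : p.natDegree ≤ D) : TD D (Polynomial.C p) := by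
  intro k l h
  rcases Nat.eq_zero_or_pos k with rfl | hk
  · rw [coeff_C_zero]
    exact coeff_eq_zero_of_natDegree_lt (by omega)
  · rw [coeff_C, if_neg (by omega), coeff_zero]

lemma TD_sum {ι : Type*} (s : Finset ι) (f : ι → Polynomial (Polynomial ℝ)) {D : ℕ}
    (h : ∀ i ∈ s, TD D (f i)) : TD D (∑ i ∈ s, f i) := by
  classical
  induction s using Finset.induction with
  | empty => simpa using TD_zero D
  | insert _ _ hi ih =>
    rw [Finset.sum_insert hi]
    exact TD_add (h _ (Finset.mem_insert_self _ _))
      (ih fun i hi' => h i (Finset.mem_insert_of_mem hi'))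

lemma TD_prod {ι : Type*} (s : Finset ι) (f : ι → Polynomial (Polynomial ℝ)) (u : ι → ℕ)
    (h : ∀ i ∈ s, TD (u i) (f i)) : TD (∑ i ∈ s, u i) (∏ i ∈ s, f i) := by
  classical
  induction s using Finset.induction with
  | empty =>
    rw [Finset.prod_empty, ← Polynomial.C_1]
    exact TD_mono (Nat.zero_le _) (TD_C (by simp))
  | insert _ _ hi ih =>
    rw [Finset.sum_insert hi, Finset.prod_insert hi]
    exact TD_mul (h _ (Finset.mem_insert_self _ _))
      (ih fun i hi' => h i (Finset.mem_insert_of_mem hi'))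

lemma TD_det {n : ℕ} (M : Matrix (Fin n) (Fin n) (Polynomial (Polynomial ℝ)))
    (u : Fin n → ℕ) (h : ∀ i j, TD (u i) (M i j)) : TD (∑ i, u i) M.det := by
  rw [Matrix.det_apply]
  refine TD_sum _ _ fun σ _ => TD_smul _ ?_
  have := TD_prod Finset.univ (fun j => M (σ j) j) (fun j => u (σ j))
    (fun j _ => h (σ j) j)
  rwa [Equiv.sum_comp σ u] at this

lemma TD_coeff_eq_zero {D : ℕ} {p} (hp : TD D p) {k : ℕ} (hk : D < k) : p.coeff k = 0 := by
  ext l; rw [hp k l (by omega), coeff_zero]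

lemma TD_natDegree_coeff_le {D : ℕ} {p} (hp : TD D p) (k : ℕ) :
    (p.coeff k).natDegree ≤ D - k := by
  rw [natDegree_le_iff_coeff_eq_zero]
  intro N hN
  exact hp k N (by omega)

/-- Degree bound for a determinant with isobaric weights. -/
lemma natDegree_det_le_of_weights {n : ℕ} (M : Matrix (Fin n) (Fin n) (Polynomial ℝ))
    (u v : Fin n → ℕ) (B : ℕ)
    (h : ∀ i j, M i j = 0 ∨ (M i j).natDegree + u i ≤ v j)
    (hB : ∑ j, v j ≤ B + ∑ i, u i) : M.det.natDegree ≤ B := by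
  rw [Matrix.det_apply]
  refine natDegree_sum_le_of_forall_le _ _ fun σ _ => ?_
  calc (Equiv.Perm.sign σ • ∏ i, M (σ i) i).natDegree
      ≤ (∏ i, M (σ i) i).natDegree := by
        rw [Units.smul_def, natDegree_le_iff_coeff_eq_zero]
        intro N hN
        rw [coeff_smul, coeff_eq_zero_of_natDegree_lt hN, smul_zero]
    _ ≤ B := by
        by_cases hz : ∃ j, M (σ j) j = 0
        · obtain ⟨j, hj⟩ := hz
          have hpz : (∏ i, M (σ i) i) = 0 := Finset.prod_eq_zero (Finset.mem_univ j) hj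
          rw [hpz]
          simp
        · push_neg at hz
          refine le_trans (natDegree_prod_le _ _) ?_
          have key : ∀ j, (M (σ j) j).natDegree + u (σ j) ≤ v j := by
            intro j
            rcases h (σ j) j with h0 | h1
            · exact absurd h0 (hz j)
            · exact h1
          have hsum : ∑ j, ((M (σ j) j).natDegree + u (σ j)) ≤ ∑ j, v j :=
            Finset.sum_le_sum fun j _ => key j
          rw [Finset.sum_add_distrib, Equiv.sum_comp σ u] at hsum
          omega

/-- For all real `a_j, b_j, c_j, d_j, e_j` (`j = 1,2,3`), with
`q₃ = a₃ρ₂² + b₃ρ₁² + c₃ρ₂ + d₃ρ₁ + e₃`, `q₁ = a₁ρ₃² + b₁ρ₂² + c₁ρ₃ + d₁ρ₂ + e₁`,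
`q₂ = a₂ρ₁² + b₂ρ₃² + c₂ρ₁ + d₂ρ₃ + e₂`, the resultant `r = Res(q₃, q₂, ρ₁)`
(a polynomial in `ρ₂, ρ₃`, of degree at most `4` in `ρ₃`) and then
`𝔮 = Res(r, q₁, ρ₃)` give a univariate polynomial `𝔮` in `ρ₂` of degree at most `8`. -/
theorem resultant_three_arcs_degree_le_eight
    (a₁ a₂ a₃ b₁ b₂ b₃ c₁ c₂ c₃ d₁ d₂ d₃ e₁ e₂ e₃ : ℝ)
    (q₃ q₂ : Polynomial (Polynomial (Polynomial ℝ)))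
    (q₁ r : Polynomial (Polynomial ℝ)) (Q : Polynomial ℝ)
    (hq₃ : q₃ = Polynomial.C (cst a₃ * ρ₂ ^ 2) + Polynomial.C (cst b₃) * Polynomial.X ^ 2
        + Polynomial.C (cst c₃ * ρ₂) + Polynomial.C (cst d₃) * Polynomial.X
        + Polynomial.C (cst e₃))
    (hq₁ : q₁ = cst a₁ * ρ₃ ^ 2 + cst b₁ * ρ₂ ^ 2 + cst c₁ * ρ₃ + cst d₁ * ρ₂ + cst e₁)
    (hq₂ : q₂ = Polynomial.C (cst a₂) * Polynomial.X ^ 2 + Polynomial.C (cst b₂ * ρ₃ ^ 2)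
        + Polynomial.C (cst c₂) * Polynomial.X + Polynomial.C (cst d₂ * ρ₃)
        + Polynomial.C (cst e₂))
    (hr : r = resultant 2 2 q₃ q₂)
    (hQ : Q = resultant 4 2 r q₁) :
    Q.natDegree ≤ 8 := by

  -- coefficients of q₃
  have e30 : q₃.coeff 0 = cst a₃ * ρ₂ ^ 2 + cst c₃ * ρ₂ + cst e₃ := by
    rw [hq₃]; simp only [coeff_add, coeff_C_mul, coeff_C, coeff_X_pow, coeff_X]; norm_num
  have e31 : q₃.coeff 1 = cst d₃ := by
    rw [hq₃]; simp only [coeff_add, coeff_C_mul, coeff_C, coeff_X_pow, coeff_X]; norm_num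
  have e32 : q₃.coeff 2 = cst b₃ := by
    rw [hq₃]; simp only [coeff_add, coeff_C_mul, coeff_C, coeff_X_pow, coeff_X]; norm_num
  have e33 : q₃.coeff 3 = 0 := by
    rw [hq₃]; simp only [coeff_add, coeff_C_mul, coeff_C, coeff_X_pow, coeff_X]; norm_num
  -- coefficients of q₂
  have e20 : q₂.coeff 0 = cst b₂ * ρ₃ ^ 2 + cst d₂ * ρ₃ + cst e₂ := by
    rw [hq₂]; simp only [coeff_add, coeff_C_mul, coeff_C, coeff_X_pow, coeff_X]; norm_num
  have e21 : q₂.coeff 1 = cst c₂ := by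
    rw [hq₂]; simp only [coeff_add, coeff_C_mul, coeff_C, coeff_X_pow, coeff_X]; norm_num
  have e22 : q₂.coeff 2 = cst a₂ := by
    rw [hq₂]; simp only [coeff_add, coeff_C_mul, coeff_C, coeff_X_pow, coeff_X]; norm_num
  have e23 : q₂.coeff 3 = 0 := by
    rw [hq₂]; simp only [coeff_add, coeff_C_mul, coeff_C, coeff_X_pow, coeff_X]; norm_num
  -- basic TD facts
  have tcst : ∀ x : ℝ, TD 0 (cst x) := fun x => TD_C (by simp)
  have tρ₂ : TD 1 ρ₂ := TD_C natDegree_X_le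
  have tρ₃ : TD 1 ρ₃ := by
    intro k l h
    rw [ρ₃, coeff_X]
    split_ifs with hk
    · rw [Polynomial.coeff_one, if_neg (by omega)]
    · rw [coeff_zero]
  have t30 : TD 2 (q₃.coeff 0) := by
    rw [e30]
    refine TD_add (TD_add ?_ (TD_mono (by omega) (TD_mul (tcst c₃) tρ₂)))
      (TD_mono (by omega) (tcst e₃))
    rw [pow_two]
    exact TD_mul (tcst a₃) (TD_mul tρ₂ tρ₂)
  have t20 : TD 2 (q₂.coeff 0) := by
    rw [e20]
    refine TD_add (TD_add ?_ (TD_mono (by omega) (TD_mul (tcst d₂) tρ₃)))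
      (TD_mono (by omega) (tcst e₂))
    rw [pow_two]
    exact TD_mul (tcst b₂) (TD_mul tρ₃ tρ₃)
  -- total degree of r is at most 4
  have hTDr : TD 4 r := by
    rw [hr]
    have hent : ∀ i j, TD ((![2,2,0,0] : Fin 4 → ℕ) i) (sylvesterMatrix 2 2 q₃ q₂ i j) := by
      intro i j
      fin_cases i <;> fin_cases j <;>
        simp only [sylvesterMatrix, Matrix.of_apply, Matrix.cons_val_zero, Matrix.cons_val_one,
          Matrix.head_cons, Matrix.cons_val_two, Matrix.tail_cons, Matrix.cons_val_three] <;>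
        norm_num <;>
        first
          | exact TD_zero _
          | (rw [e33]; exact TD_zero _)
          | (rw [e23]; exact TD_zero _)
          | exact t30
          | exact t20
          | (rw [e31]; exact TD_mono (Nat.zero_le _) (tcst d₃))
          | (rw [e32]; exact TD_mono (Nat.zero_le _) (tcst b₃))
          | (rw [e21]; exact TD_mono (Nat.zero_le _) (tcst c₂))
          | (rw [e22]; exact TD_mono (Nat.zero_le _) (tcst a₂))
    have := TD_det (sylvesterMatrix 2 2 q₃ q₂) ![2,2,0,0] hent
    have h4 : ∑ i, (![2,2,0,0] : Fin 4 → ℕ) i = 4 := by simp [Fin.sum_univ_four]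
    rw [h4] at this
    exact this
  -- degree bounds on coefficients of r
  have nr : ∀ k, (r.coeff k).natDegree ≤ 4 - k := fun k => TD_natDegree_coeff_le hTDr k
  have nr0 := nr 0; have nr1 := nr 1; have nr2 := nr 2; have nr3 := nr 3; have nr4 := nr 4
  have zr5 : r.coeff 5 = 0 := TD_coeff_eq_zero hTDr (by omega)
  -- coefficients of q₁
  have f10 : (q₁.coeff 0).natDegree ≤ 2 := by
    rw [hq₁, cst, cst, cst, cst, cst, ρ₂, ρ₃]
    simp only [coeff_add, coeff_C_mul, coeff_C, coeff_X_pow, coeff_X, ← Polynomial.C_pow,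
      ← Polynomial.C_mul]
    norm_num
    compute_degree
  have f11 : q₁.coeff 1 = Polynomial.C c₁ := by
    rw [hq₁, cst, cst, cst, cst, cst, ρ₂, ρ₃]
    simp only [coeff_add, coeff_C_mul, coeff_C, coeff_X_pow, coeff_X, ← Polynomial.C_pow,
      ← Polynomial.C_mul]
    norm_num
  have f12 : q₁.coeff 2 = Polynomial.C a₁ := by
    rw [hq₁, cst, cst, cst, cst, cst, ρ₂, ρ₃]
    simp only [coeff_add, coeff_C_mul, coeff_C, coeff_X_pow, coeff_X, ← Polynomial.C_pow,
      ← Polynomial.C_mul]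
    norm_num
  have f1z : ∀ k, 2 < k → q₁.coeff k = 0 := by
    intro k hk
    rw [hq₁, cst, cst, cst, cst, cst, ρ₂, ρ₃]
    simp only [coeff_add, coeff_C_mul, coeff_C, coeff_X_pow, coeff_X, ← Polynomial.C_pow,
      ← Polynomial.C_mul]
    rw [if_neg (by omega), if_neg (by omega), if_neg (by omega), if_neg (by omega),
      if_neg (by omega)]
    ring
  have n11 : (q₁.coeff 1).natDegree ≤ 0 := by rw [f11]; simp
  have n12 : (q₁.coeff 2).natDegree ≤ 0 := by rw [f12]; simp
  have z13 := f1z 3 (by omega); have z14 := f1z 4 (by omega); have z15 := f1z 5 (by omega)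
  -- the final determinant bound
  have h1 : ∀ i j, (sylvesterMatrix 4 2 r q₁) i j = 0 ∨
      ((sylvesterMatrix 4 2 r q₁) i j).natDegree + (i : ℕ) ≤ (![4,5,2,3,4,5] : Fin (4+2) → ℕ) j := by
    intro i j
    fin_cases i <;> fin_cases j <;>
      simp only [sylvesterMatrix, Matrix.of_apply] <;>
      norm_num <;>
      first
        | exact Or.inl zr5
        | exact Or.inl z13
        | exact Or.inl z14
        | exact Or.inl z15
        | (right; omega)
  have h2 : ∑ j, (![4,5,2,3,4,5] : Fin (4+2) → ℕ) j ≤ 8 + ∑ i : Fin (4+2), (i : ℕ) := by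
    decide
  have := natDegree_det_le_of_weights (sylvesterMatrix 4 2 r q₁) (fun i => (i : ℕ)) ![4,5,2,3,4,5] 8 h1 h2
  rw [hQ]
  exact this
end
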